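/- Let α = (9 + √77)/20 and β = (9 − √77)/20. Then 0 < β < α < 1, and the quadruple (M(a), M(b), M(c), M(d)) = (α, β, α, β) satisfies M(a) = (10/11)(1 − (M(b) + M(d) − M(b)·M(d))), M(b) = (10/11)(1 − (M(a) + M(c) − M(a)·M(c))), M(c) = (10/11)(1 − (M(b) + M(d) − M(b)·M(d))), and M(d) = (10/11)(1 − (M(a) + M(c) − M(a)·M(c))). -/

import Mathlib

theorem four_cycle_alternating_model :
    let α : ℝ := (9 + Real.sqrt 77) / 20
    let β : ℝ := (9 - Real.sqrt 77) / 20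
    let Ma : ℝ := α
    let Mb : ℝ := β
    let Mc : ℝ := α
    let Md : ℝ := β
    (0 < β ∧ β < α ∧ α < 1) ∧
    Ma = (10/11) * (1 - (Mb + Md - Mb * Md)) ∧
    Mb = (10/11) * (1 - (Ma + Mc - Ma * Mc)) ∧
    Mc = (10/11) * (1 - (Mb + Md - Mb * Md)) ∧
    Md = (10/11) * (1 - (Ma + Mc - Ma * Mc)) := by
  have hs : Real.sqrt 77 ^ 2 = 77 := Real.sq_sqrt (by norm_num)
  have h1 : (8:ℝ) < Real.sqrt 77 := by
    have := Real.sqrt_lt_sqrt (by norm_num) (show (64:ℝ) < 77 by norm_num)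
    simpa [Real.sqrt_eq_iff_eq_sq, show Real.sqrt 64 = 8 by
      rw [show (64:ℝ) = 8^2 by norm_num]; exact Real.sqrt_sq (by norm_num)] using this
  have h2 : Real.sqrt 77 < 9 := by
    have := Real.sqrt_lt_sqrt (by norm_num) (show (77:ℝ) < 81 by norm_num)
    simpa [show Real.sqrt 81 = 9 by
      rw [show (81:ℝ) = 9^2 by norm_num]; exact Real.sqrt_sq (by norm_num)] using this
  refine ⟨⟨by nlinarith, by nlinarith, by nlinarith⟩, by nlinarith, by nlinarith, by nlinarith, by nlinarith⟩
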